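/- (Strong duality, eigenvalue case.) For every symmetric f ∈ ℝ⟨x⟩ of degree at most 2d, sup { λ ∈ ℝ : f − λ ∈ Σ_{2d} } = inf { L(f) : L : ℝ⟨x⟩_{2d} → ℝ linear, L(p*) = L(p) for all p, L(1) = 1, and L(σ) ≥ 0 for all σ ∈ Σ_{2d} }, as an equality in the extended reals. -/

import Mathlib

open scoped Matrix

/-- `ℝ⟨x₁,…,xₙ⟩`: noncommutative polynomials with real coefficients in `n`
noncommuting letters, realized as the monoid algebra of the free monoid on `Fin n`. -/
abbrev NCPoly (n : ℕ) : Type := MonoidAlgebra ℝ (FreeMonoid (Fin n))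

/-- The canonical involution `f ↦ f⋆` on `ℝ⟨x⟩`: it fixes `ℝ` and each letter `xᵢ`
and reverses words. -/
noncomputable def ncStar {n : ℕ} (f : NCPoly n) : NCPoly n :=
  MonoidAlgebra.ofCoeff (Finsupp.mapDomain FreeMonoid.reverse f.coeff)

/-- `degLE f d`: the nc polynomial `f` has degree at most `d`. -/
def degLE {n : ℕ} (f : NCPoly n) (d : ℕ) : Prop :=
  ∀ w ∈ f.coeff.support, FreeMonoid.length w ≤ d

/-- The `i`-th letter `xᵢ` as an nc polynomial. -/
noncomputable def ncX {n : ℕ} (i : Fin n) : NCPoly n :=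
  MonoidAlgebra.of ℝ (FreeMonoid (Fin n)) (FreeMonoid.of i)

/-- A word `w` viewed as an nc polynomial (the monomial `w` with coefficient `1`). -/
noncomputable def ncWord {n : ℕ} (w : FreeMonoid (Fin n)) : NCPoly n :=
  MonoidAlgebra.of ℝ (FreeMonoid (Fin n)) w

/-- Evaluation of an nc polynomial at a tuple `A = (A₁,…,Aₙ)` of square matrices:
the algebra homomorphism `ℝ⟨x⟩ → ℝ^{r×r}` sending `xᵢ` to `Aᵢ`. -/
noncomputable def ncEval {n r : ℕ} (A : Fin n → Matrix (Fin r) (Fin r) ℝ) :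
    NCPoly n →ₐ[ℝ] Matrix (Fin r) (Fin r) ℝ :=
  MonoidAlgebra.lift ℝ _ (FreeMonoid (Fin n)) (FreeMonoid.lift A)

/-- The cone `Σ` of sums of Hermitian squares `Σᵢ gᵢ⋆ gᵢ`. -/
def SOHS (n : ℕ) : Set (NCPoly n) :=
  { f | ∃ (k : ℕ) (g : Fin k → NCPoly n), f = ∑ i, ncStar (g i) * g i }

/-- The truncated cone `Σ_{2d}`: sums of Hermitian squares `Σᵢ gᵢ⋆ gᵢ` with `deg gᵢ ≤ d`. -/
def SOHSdeg (n d : ℕ) : Set (NCPoly n) :=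
  { f | ∃ (k : ℕ) (g : Fin k → NCPoly n), (∀ i, degLE (g i) d) ∧ f = ∑ i, ncStar (g i) * g i }

/-- `f ∼cyc g`: `f - g` is a finite sum of commutators. -/
def cycEq {n : ℕ} (f g : NCPoly n) : Prop :=
  ∃ (k : ℕ) (p q : Fin k → NCPoly n), f - g = ∑ i, (p i * q i - q i * p i)

/-- `Θ`: nc polynomials cyclically equivalent to a sum of Hermitian squares. -/
def Theta (n : ℕ) : Set (NCPoly n) :=
  { f | ∃ σ ∈ SOHS n, cycEq f σ }

/-- The quadratic module `Q(𝔤)` generated by a finite set `G` of nc polynomials: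
all finite sums `Σᵢ pᵢ⋆ gᵢ pᵢ` with `gᵢ ∈ G ∪ {1}`. -/
def QModule {n : ℕ} (G : Finset (NCPoly n)) : Set (NCPoly n) :=
  { f | ∃ (k : ℕ) (g p : Fin k → NCPoly n),
      (∀ i, g i ∈ (G : Set (NCPoly n)) ∪ {1}) ∧ f = ∑ i, ncStar (p i) * g i * p i }

/-- Words of degree (length) at most `d` in `n` letters. -/
def WordLE (n d : ℕ) : Type := { w : FreeMonoid (Fin n) // FreeMonoid.length w ≤ d }

noncomputable instance (n d : ℕ) : Fintype (WordLE n d) := by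
  have h : {l : List (Fin n) | l.length ≤ d}.Finite := List.finite_length_le (Fin n) d
  have : Finite (WordLE n d) := h.to_subtype
  exact Fintype.ofFinite _

instance (n d : ℕ) : DecidableEq (WordLE n d) := by
  unfold WordLE FreeMonoid; exact inferInstance


namespace StrongDualAux
open scoped Classical
open Topology Filter

noncomputable instance (n d : ℕ) : Fintype { w : FreeMonoid (Fin n) // FreeMonoid.length w ≤ d } :=
  inferInstanceAs (Fintype (WordLE n d))

variable {n d : ℕ}

noncomputable section

/-- The polynomial with coefficient vector `c` on words of length ≤ d. -/
def sdPoly (n d : ℕ) (c : WordLE n d → ℝ) : NCPoly n :=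
  ∑ w : WordLE n d, MonoidAlgebra.single w.1 (c w)

/-- The Gram-matrix polynomial `∑ G u v · u⋆ v`. -/
def sdGram (n d : ℕ) (G : Matrix (WordLE n d) (WordLE n d) ℝ) : NCPoly n :=
  ∑ u : WordLE n d, ∑ v : WordLE n d, MonoidAlgebra.single (u.1.reverse * v.1) (G u v)

lemma ncStar_single (w : FreeMonoid (Fin n)) (a : ℝ) :
    ncStar (MonoidAlgebra.single w a : NCPoly n) = MonoidAlgebra.single w.reverse a :=
  congrArg MonoidAlgebra.ofCoeff Finsupp.mapDomain_single

lemma reverse_comp_reverse :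
    (FreeMonoid.reverse ∘ FreeMonoid.reverse : FreeMonoid (Fin n) → FreeMonoid (Fin n)) = id := by
  funext w; exact FreeMonoid.reverse_reverse

lemma ncStar_ncStar (p : NCPoly n) : ncStar (ncStar p) = p := by
  rw [ncStar, ncStar, MonoidAlgebra.coeff_ofCoeff, ← Finsupp.mapDomain_comp, reverse_comp_reverse,
    Finsupp.mapDomain_id, MonoidAlgebra.ofCoeff_coeff]

/-- `ncStar` as a linear map. -/
def ncStarL (n : ℕ) : NCPoly n →ₗ[ℝ] NCPoly n :=
  MonoidAlgebra.mapDomainLinearMap ℝ ℝ FreeMonoid.reverse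

@[simp] lemma ncStarL_apply (p : NCPoly n) : ncStarL n p = ncStar p := rfl

lemma ncStar_one : ncStar (1 : NCPoly n) = 1 := by
  have : (1 : NCPoly n) = MonoidAlgebra.single 1 1 := rfl
  rw [this, ncStar_single]; rfl

lemma degLE_single {w : FreeMonoid (Fin n)} {a : ℝ} (h : FreeMonoid.length w ≤ d) :
    degLE (MonoidAlgebra.single w a : NCPoly n) d := by
  intro t ht
  rw [MonoidAlgebra.coeff_single] at ht
  have := Finsupp.support_single_subset ht
  simp only [Finset.mem_singleton] at this
  subst this; exact h

lemma degLE_sum {s : Finset ι} {F : ι → NCPoly n} (h : ∀ i ∈ s, degLE (F i) d) :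
    degLE (∑ i ∈ s, F i) d := by
  intro t ht
  rw [MonoidAlgebra.coeff_sum] at ht
  have := Finsupp.support_finset_sum ht
  simp only [Finset.mem_biUnion] at this
  obtain ⟨i, hi, hti⟩ := this
  exact h i hi t hti

lemma degLE_sdPoly (c : WordLE n d → ℝ) : degLE (sdPoly n d c) d :=
  degLE_sum fun w _ => degLE_single w.2

lemma degLE_sdGram (G : Matrix (WordLE n d) (WordLE n d) ℝ) : degLE (sdGram n d G) (2 * d) := by
  refine degLE_sum fun u _ => degLE_sum fun v _ => degLE_single ?_
  rw [FreeMonoid.length_mul, FreeMonoid.length_reverse, two_mul]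
  exact Nat.add_le_add u.2 v.2

lemma sdPoly_coeff (c : WordLE n d → ℝ) (t : FreeMonoid (Fin n)) :
    (sdPoly n d c).coeff t = if h : FreeMonoid.length t ≤ d then c ⟨t, h⟩ else 0 := by
  rw [sdPoly, MonoidAlgebra.coeff_sum, Finsupp.finset_sum_apply]
  split_ifs with h
  · have hmem : (⟨t, h⟩ : WordLE n d) ∈ (Finset.univ : Finset (WordLE n d)) :=
      Finset.mem_univ _
    refine (Finset.sum_eq_single_of_mem (⟨t, h⟩ : WordLE n d) hmem ?_).trans ?_
    · intro b _ hb
      have : b.1 ≠ t := fun hbt => hb (Subtype.ext hbt)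
      simp [Finsupp.single_apply, this]
    · simp [Finsupp.single_apply]
  · refine Finset.sum_eq_zero fun w _ => ?_
    have : w.1 ≠ t := fun hw => h (hw ▸ w.2)
    simp [Finsupp.single_apply, this]

lemma sdPoly_eq {p : NCPoly n} (hp : degLE p d) : sdPoly n d (fun w => p.coeff w.1) = p := by
  ext t
  rw [sdPoly_coeff]
  split_ifs with h
  · rfl
  · by_contra hne
    exact h (hp t (Finsupp.mem_support_iff.2 fun h0 => hne h0.symm))

lemma star_sdPoly_mul (c c' : WordLE n d → ℝ) :
    ncStar (sdPoly n d c) * sdPoly n d c' = sdGram n d (fun u v => c u * c' v) := by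
  have hstar : ncStar (sdPoly n d c) = ∑ u : WordLE n d, MonoidAlgebra.single u.1.reverse (c u) := by
    rw [← ncStarL_apply, sdPoly, map_sum]
    exact Finset.sum_congr rfl fun u _ => ncStar_single _ _
  rw [hstar, sdPoly, Finset.sum_mul_sum]
  unfold sdGram
  refine Finset.sum_congr rfl fun u _ => Finset.sum_congr rfl fun v _ => ?_
  simp only [MonoidAlgebra.single_mul_single]

lemma sdGram_apply (G : Matrix (WordLE n d) (WordLE n d) ℝ) (t : FreeMonoid (Fin n)) :
    (sdGram n d G).coeff t =
      ∑ u : WordLE n d, ∑ v : WordLE n d, (if u.1.reverse * v.1 = t then G u v else 0) := by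
  rw [sdGram, MonoidAlgebra.coeff_sum, Finsupp.finset_sum_apply]
  refine Finset.sum_congr rfl fun u _ => ?_
  rw [MonoidAlgebra.coeff_sum, Finsupp.finset_sum_apply]
  exact Finset.sum_congr rfl fun v _ => Finsupp.single_apply

lemma ncStar_sdGram (G : Matrix (WordLE n d) (WordLE n d) ℝ) :
    ncStar (sdGram n d G) = sdGram n d Gᵀ := by
  rw [← ncStarL_apply, sdGram, map_sum]
  have : ∀ u : WordLE n d, ncStarL n (∑ v : WordLE n d, MonoidAlgebra.single (u.1.reverse * v.1) (G u v))
      = ∑ v : WordLE n d, MonoidAlgebra.single (v.1.reverse * u.1) (G u v) := by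
    intro u
    rw [map_sum]
    refine Finset.sum_congr rfl fun v _ => ?_
    rw [ncStarL_apply, ncStar_single, FreeMonoid.reverse_mul, FreeMonoid.reverse_reverse]
  rw [Finset.sum_congr rfl fun u _ => this u, Finset.sum_comm, sdGram]
  refine Finset.sum_congr rfl fun v _ => Finset.sum_congr rfl fun u _ => rfl


lemma degLE_one : degLE (1 : NCPoly n) d := by
  have h1 : (1 : NCPoly n) = MonoidAlgebra.single 1 1 := rfl
  rw [h1]
  exact degLE_single (by simp [FreeMonoid.length_one])

lemma one_mem_sohs : (1 : NCPoly n) ∈ SOHSdeg n d := by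
  refine ⟨1, fun _ => 1, fun _ => degLE_one, ?_⟩
  simp [ncStar_one]

lemma psd_add {ι : Type*} [Fintype ι] {A B : Matrix ι ι ℝ}
    (hA : A.PosSemidef) (hB : B.PosSemidef) : (A + B).PosSemidef := by
  exact hA.add hB

lemma psd_zero {ι : Type*} [Fintype ι] : (0 : Matrix ι ι ℝ).PosSemidef := by
  exact Matrix.PosSemidef.zero

lemma psd_sum {ι κ : Type*} [Fintype ι] {s : Finset κ} {G : κ → Matrix ι ι ℝ}
    (h : ∀ i ∈ s, (G i).PosSemidef) : (∑ i ∈ s, G i).PosSemidef := by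
  classical
  induction s using Finset.induction_on with
  | empty => simpa using (psd_zero (ι := ι))
  | insert a s hx ih =>
    rw [Finset.sum_insert hx]
    exact psd_add (h _ (Finset.mem_insert_self _ _))
      (ih fun i hi => h i (Finset.mem_insert_of_mem hi))

lemma psd_smul {ι : Type*} [Fintype ι] {A : Matrix ι ι ℝ} (hA : A.PosSemidef)
    {c : ℝ} (hc : 0 ≤ c) : (c • A).PosSemidef := by
  exact hA.smul hc

lemma psd_diag_nonneg {ι : Type*} [Fintype ι] [DecidableEq ι] {A : Matrix ι ι ℝ}
    (hA : A.PosSemidef) (u : ι) : 0 ≤ A u u := by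
  exact hA.diag_nonneg

lemma herm_apply {ι : Type*} [Fintype ι] {A : Matrix ι ι ℝ}
    (hA : A.IsHermitian) (u v : ι) : A u v = A v u := by
  have h2 := congrFun (congrFun hA.symm u) v
  simpa [Matrix.conjTranspose_apply] using h2

lemma sdGram_sum {κ : Type*} {s : Finset κ} (G : κ → Matrix (WordLE n d) (WordLE n d) ℝ) :
    sdGram n d (∑ i ∈ s, G i) = ∑ i ∈ s, sdGram n d (G i) := by
  unfold sdGram
  have h1 : ∀ u v : WordLE n d, (MonoidAlgebra.single (u.1.reverse * v.1)
      ((∑ i ∈ s, G i) u v) : NCPoly n) =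
      ∑ i ∈ s, MonoidAlgebra.single (u.1.reverse * v.1) (G i u v) := by
    intro u v
    rw [Matrix.sum_apply]
    exact map_sum (MonoidAlgebra.singleAddHom _) _ _
  simp only [h1]
  refine Eq.trans (Finset.sum_congr rfl fun u _ => Finset.sum_comm) ?_
  exact Finset.sum_comm

lemma psd_outer (c : WordLE n d → ℝ) :
    (Matrix.vecMulVec c c).PosSemidef := by
  simpa using Matrix.posSemidef_vecMulVec_self_star c

lemma sohs_to_gram {σ : NCPoly n} (h : σ ∈ SOHSdeg n d) :
    ∃ G : Matrix (WordLE n d) (WordLE n d) ℝ, G.PosSemidef ∧ sdGram n d G = σ := by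
  obtain ⟨k, g, hg, rfl⟩ := h
  refine ⟨∑ i, Matrix.vecMulVec (fun w => (g i).coeff w.1) (fun w => (g i).coeff w.1),
    psd_sum fun i _ => psd_outer _, ?_⟩
  rw [sdGram_sum]
  refine Finset.sum_congr rfl fun i _ => ?_
  have h2 := star_sdPoly_mul (n := n) (d := d) (fun w => (g i).coeff w.1) (fun w => (g i).coeff w.1)
  rw [sdPoly_eq (hg i)] at h2
  rw [h2]
  congr 1

lemma gram_to_sohs {G : Matrix (WordLE n d) (WordLE n d) ℝ} (hG : G.PosSemidef) :
    sdGram n d G ∈ SOHSdeg n d := by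
  obtain ⟨m, v, rfl⟩ := Matrix.posSemidef_iff_eq_sum_vecMulVec.mp hG
  refine ⟨m, fun j => sdPoly n d (v j), fun j => degLE_sdPoly _, ?_⟩
  rw [sdGram_sum]
  refine Finset.sum_congr rfl fun j _ => ?_
  rw [star_sdPoly_mul]
  congr 1

lemma sohs_star {σ : NCPoly n} (h : σ ∈ SOHSdeg n d) : ncStar σ = σ := by
  obtain ⟨G, hG, rfl⟩ := sohs_to_gram h
  rw [ncStar_sdGram]
  congr 1
  ext u v
  exact herm_apply hG.1 v u

lemma sohs_degLE {σ : NCPoly n} (h : σ ∈ SOHSdeg n d) : degLE σ (2 * d) := by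
  obtain ⟨G, _, rfl⟩ := sohs_to_gram h
  exact degLE_sdGram G


lemma offdiag_zero {G : Matrix (WordLE n d) (WordLE n d) ℝ} (hG : G.PosSemidef)
    {u : WordLE n d} (hu : G u u = 0) (v : WordLE n d) : G u v = 0 := by
  by_cases huv : u = v
  · subst huv; exact hu
  have hvu : G v u = G u v := herm_apply hG.1 v u
  have key : ∀ t : ℝ, 0 ≤ 2 * t * G u v + G v v := by
    intro t
    have h2 := hG.dotProduct_mulVec_nonneg (fun w => (if w = u then t else 0) + (if w = v then 1 else 0))
    have hQ : dotProduct
        (star fun w => (if w = u then t else 0) + (if w = v then 1 else 0))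
        (G *ᵥ fun w => (if w = u then t else 0) + (if w = v then 1 else 0)) =
        t * (G u u * t + G u v) + (G v u * t + G v v) := by
      have hmv : ∀ a, (G *ᵥ fun w => (if w = u then t else 0) + (if w = v then 1 else 0)) a
          = G a u * t + G a v := by
        intro a
        simp [Matrix.mulVec, dotProduct, mul_add, Finset.sum_add_distrib, mul_ite,
          mul_zero, mul_one, Finset.sum_ite_eq', huv]
      have hst : (star fun w : WordLE n d => (if w = u then t else 0) + (if w = v then 1 else 0))
          = fun w => (if w = u then t else 0) + (if w = v then 1 else 0) := by
        funext w; simp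
      rw [hst]
      simp only [dotProduct, hmv]
      rw [Finset.sum_congr rfl (fun a _ => add_mul (if a = u then t else 0)
        (if a = v then 1 else 0) (G a u * t + G a v)), Finset.sum_add_distrib]
      simp [ite_mul, Finset.sum_ite_eq', huv]
    rw [hQ] at h2
    have heq : t * (G u u * t + G u v) + (G v u * t + G v v) = 2 * t * G u v + G v v := by
      rw [hu, hvu]; ring
    linarith [h2, heq.symm.le]
  by_contra hne
  have hval := key (-(G v v + 1) / (2 * G u v))
  have h3 : 2 * (-(G v v + 1) / (2 * G u v)) * G u v = -(G v v + 1) := by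
    field_simp
  rw [h3] at hval
  linarith

lemma gram_diag_zero {G : Matrix (WordLE n d) (WordLE n d) ℝ} (hG : G.PosSemidef)
    (h : sdGram n d G = 0) : ∀ u, G u u = 0 := by
  by_contra hc
  push_neg at hc
  obtain ⟨u₀, hu₀⟩ := hc
  set S := Finset.univ.filter (fun u : WordLE n d => G u u ≠ 0) with hSdef
  have hS : S.Nonempty := ⟨u₀, by simp [hSdef, hu₀]⟩
  obtain ⟨u, huS, hmax⟩ := Finset.exists_max_image S (fun w => FreeMonoid.length w.1) hS
  have huu : G u u ≠ 0 := by
    have h5 := huS; rw [hSdef, Finset.mem_filter] at h5; exact h5.2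
  have hdiag0 : ∀ a : WordLE n d, FreeMonoid.length u.1 < FreeMonoid.length a.1 →
      G a a = 0 := by
    intro a ha
    by_contra hne
    have h6 : a ∈ S := by rw [hSdef, Finset.mem_filter]; exact ⟨Finset.mem_univ _, hne⟩
    exact absurd (hmax a h6) (not_le.2 ha)
  have hcoeff : (sdGram n d G).coeff (u.1.reverse * u.1) = G u u := by
    rw [sdGram_apply, ← Finset.sum_product']
    have hmemu : ((u, u) : WordLE n d × WordLE n d) ∈
        (Finset.univ : Finset (WordLE n d × WordLE n d)) := Finset.mem_univ _
    refine (Finset.sum_eq_single_of_mem ((u, u) : WordLE n d × WordLE n d) hmemu ?_).trans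
      (by simp)
    rintro ⟨a, b⟩ _ hab
    by_cases hw : a.1.reverse * b.1 = u.1.reverse * u.1
    · have hlen : FreeMonoid.length a.1 + FreeMonoid.length b.1 =
          FreeMonoid.length u.1 + FreeMonoid.length u.1 := by
        have h7 := congrArg FreeMonoid.length hw
        simpa [FreeMonoid.length_mul, FreeMonoid.length_reverse] using h7
      by_cases hla : FreeMonoid.length a.1 ≤ FreeMonoid.length u.1
      · by_cases hlb : FreeMonoid.length b.1 ≤ FreeMonoid.length u.1
        · exfalso
          have h1 : FreeMonoid.length a.1 = FreeMonoid.length u.1 := by omega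
          have hlist := congrArg FreeMonoid.toList hw
          simp only [FreeMonoid.toList_mul] at hlist
          have hlen2 : (FreeMonoid.toList a.1.reverse).length =
              (FreeMonoid.toList u.1.reverse).length := by
            show FreeMonoid.length a.1.reverse = FreeMonoid.length u.1.reverse
            rw [FreeMonoid.length_reverse, FreeMonoid.length_reverse, h1]
          obtain ⟨heq1, heq2⟩ := List.append_inj hlist hlen2
          have hra : a.1.reverse = u.1.reverse := FreeMonoid.toList.injective heq1
          have hb : b.1 = u.1 := FreeMonoid.toList.injective heq2
          have ha2 : a.1 = u.1 := by
            have h8 := congrArg FreeMonoid.reverse hra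
            rwa [FreeMonoid.reverse_reverse, FreeMonoid.reverse_reverse] at h8
          exact hab (Prod.ext (Subtype.ext ha2) (Subtype.ext hb))
        · push_neg at hlb
          have hba := offdiag_zero hG (hdiag0 b hlb) a
          have hab2 : G a b = G b a := herm_apply hG.1 a b
          simp [hw, hab2, hba]
      · push_neg at hla
        have h9 := offdiag_zero hG (hdiag0 a hla) b
        simp [hw, h9]
    · simp [hw]
  have h0 : (sdGram n d G).coeff (u.1.reverse * u.1) = 0 := by rw [h]; rfl
  exact huu (hcoeff.symm.trans h0)

lemma gram_inj {G : Matrix (WordLE n d) (WordLE n d) ℝ} (hG : G.PosSemidef)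
    (h : sdGram n d G = 0) : G = 0 := by
  have hdiag := gram_diag_zero hG h
  ext a b
  exact offdiag_zero hG (hdiag a) b


lemma closed_image_of_cone {D E : Type*} [NormedAddCommGroup D] [NormedSpace ℝ D]
    [FiniteDimensional ℝ D] [NormedAddCommGroup E] [NormedSpace ℝ E]
    (T : D →ₗ[ℝ] E) (P : Set D) (hP : IsClosed P) (h0 : (0 : D) ∈ P)
    (hsmul : ∀ c : ℝ, 0 ≤ c → ∀ x ∈ P, c • x ∈ P)
    (hinj : ∀ x ∈ P, T x = 0 → x = 0) : IsClosed (T '' P) := by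
  have hTc : Continuous T := T.continuous_of_finiteDimensional
  by_cases hS : (P ∩ Metric.sphere 0 1).Nonempty
  · have hcomp : IsCompact (P ∩ Metric.sphere 0 1) :=
      (isCompact_sphere (0 : D) 1).inter_left hP
    obtain ⟨x₀, hx₀, hmin0⟩ := hcomp.exists_isMinOn hS (hTc.norm.continuousOn)
    have hmin := isMinOn_iff.mp hmin0
    set ε := ‖T x₀‖ with hε
    have hεpos : 0 < ε := by
      have hx0ne : x₀ ≠ 0 := by
        intro h0'
        have := hx₀.2
        rw [h0', mem_sphere_iff_norm] at this
        simp at this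
      have hT0 : T x₀ ≠ 0 := fun hT0 => hx0ne (hinj _ hx₀.1 hT0)
      exact norm_pos_iff.mpr hT0
    have hbound : ∀ x ∈ P, ε * ‖x‖ ≤ ‖T x‖ := by
      intro x hx
      rcases eq_or_ne x 0 with rfl | hxne
      · simp
      · have hxpos : (0 : ℝ) < ‖x‖ := norm_pos_iff.mpr hxne
        have hxs : ‖x‖⁻¹ • x ∈ P ∩ Metric.sphere 0 1 := by
          refine ⟨hsmul _ (by positivity) x hx, ?_⟩
          rw [mem_sphere_iff_norm, sub_zero, norm_smul, norm_inv, norm_norm]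
          exact inv_mul_cancel₀ (norm_ne_zero_iff.mpr hxne)
        have h1 := hmin _ hxs
        rw [map_smul, norm_smul, norm_inv, norm_norm, inv_mul_eq_div] at h1
        exact (le_div_iff₀ hxpos).mp h1
    apply IsSeqClosed.isClosed
    intro ys y hmem hlim
    have hex : ∀ k, ∃ x, x ∈ P ∧ T x = ys k := fun k => hmem k
    choose a hP' hT' using hex
    have hnb : ∀ᶠ k in Filter.atTop, ‖ys k‖ < ‖y‖ + 1 :=
      (hlim.norm).eventually_lt_const (by linarith [norm_nonneg y])
    obtain ⟨N, hN⟩ := Filter.eventually_atTop.mp hnb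
    set R := ε⁻¹ * (‖y‖ + 1) with hR
    have hsub : ∀ k, a (N + k) ∈ P ∩ Metric.closedBall 0 R := by
      intro k
      refine ⟨hP' _, ?_⟩
      rw [Metric.mem_closedBall, dist_zero_right]
      have h1 := hbound _ (hP' (N + k))
      have h2 : ‖T (a (N + k))‖ ≤ ‖y‖ + 1 := by
        rw [hT']
        exact (hN _ (Nat.le_add_right N k)).le
      have h3 : ε * ‖a (N + k)‖ ≤ ‖y‖ + 1 := h1.trans h2
      have h4 : ‖a (N + k)‖ = ε⁻¹ * (ε * ‖a (N + k)‖) := by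
        field_simp
      rw [h4]
      exact mul_le_mul_of_nonneg_left h3 (by positivity)
    have hcomp2 : IsCompact (P ∩ Metric.closedBall 0 R) :=
      (isCompact_closedBall (0 : D) R).inter_left hP
    obtain ⟨z, hz, φ, hφ, hzt⟩ := hcomp2.tendsto_subseq hsub
    refine ⟨z, hz.1, ?_⟩
    have hTz : Filter.Tendsto (fun k => T (a (N + φ k))) Filter.atTop (𝓝 (T z)) :=
      (hTc.tendsto z).comp hzt
    have hψ : StrictMono (fun k => N + φ k) := fun i j h => Nat.add_lt_add_left (hφ h) N
    have hTy : Filter.Tendsto (fun k => T (a (N + φ k))) Filter.atTop (𝓝 y) := by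
      have h4 : Filter.Tendsto (fun k => ys (N + φ k)) Filter.atTop (𝓝 y) :=
        hlim.comp hψ.tendsto_atTop
      have heq : (fun k => T (a (N + φ k))) = fun k => ys (N + φ k) :=
        funext fun k => hT' _
      rw [heq]
      exact h4
    exact tendsto_nhds_unique hTz hTy
  · have hP0 : P = {0} := by
      apply Set.eq_singleton_iff_unique_mem.mpr
      refine ⟨h0, fun x hx => ?_⟩
      by_contra hxne
      refine hS ⟨‖x‖⁻¹ • x, hsmul _ (by positivity) x hx, ?_⟩
      rw [mem_sphere_iff_norm, sub_zero, norm_smul, norm_inv, norm_norm]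
      exact inv_mul_cancel₀ (norm_ne_zero_iff.mpr hxne)
    rw [hP0, Set.image_singleton, map_zero]
    exact isClosed_singleton


/-- Coefficient-extraction map into Euclidean space. -/
def piE (n d : ℕ) : NCPoly n →ₗ[ℝ] EuclideanSpace ℝ (WordLE n (2 * d)) where
  toFun p := WithLp.toLp 2 (fun w => p.coeff w.1)
  map_add' p q := rfl
  map_smul' c p := rfl

lemma piE_inj {p : NCPoly n} (hp : degLE p (2 * d)) (h : piE n d p = 0) : p = 0 := by
  ext t
  by_cases ht : FreeMonoid.length t ≤ 2 * d
  · exact congrArg (fun z => z ⟨t, ht⟩) h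
  · show p.coeff t = 0
    by_contra hne
    exact ht (hp t (Finsupp.mem_support_iff.2 hne))

lemma sdGram_add (G H : Matrix (WordLE n d) (WordLE n d) ℝ) :
    sdGram n d (G + H) = sdGram n d G + sdGram n d H := by
  simp [sdGram, Matrix.add_apply, MonoidAlgebra.single_add, Finset.sum_add_distrib]

lemma sdGram_smul (c : ℝ) (G : Matrix (WordLE n d) (WordLE n d) ℝ) :
    sdGram n d (c • G) = c • sdGram n d G := by
  simp only [sdGram, Matrix.smul_apply, Finset.smul_sum, smul_eq_mul]
  refine Finset.sum_congr rfl fun u _ => Finset.sum_congr rfl fun v _ => ?_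
  rw [MonoidAlgebra.smul_single, smul_eq_mul]

/-- The map `D → E` sending a putative Gram matrix (as a Euclidean vector) to the
coefficient vector of the associated polynomial. -/
def psiD (n d : ℕ) : EuclideanSpace ℝ (WordLE n d × WordLE n d) →ₗ[ℝ]
    EuclideanSpace ℝ (WordLE n (2 * d)) where
  toFun x := piE n d (sdGram n d (Matrix.of fun u v => x (u, v)))
  map_add' x y := by
    have h1 : (Matrix.of fun u v => (x + y) (u, v)) =
        (Matrix.of fun u v => x (u, v)) + Matrix.of fun u v => y (u, v) := rfl
    dsimp only
    rw [h1, sdGram_add, map_add]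
  map_smul' c x := by
    have h1 : (Matrix.of fun u v => (c • x) (u, v)) =
        c • Matrix.of fun u v => x (u, v) := rfl
    dsimp only
    rw [h1, sdGram_smul, map_smul]
    rfl

/-- The PSD cone inside `D`. -/
def psdSet (n d : ℕ) : Set (EuclideanSpace ℝ (WordLE n d × WordLE n d)) :=
  {x | (Matrix.of fun u v => x (u, v)).PosSemidef}

lemma quad_eq (v : WordLE n d → ℝ) (x : EuclideanSpace ℝ (WordLE n d × WordLE n d)) :
    dotProduct (star v) ((Matrix.of fun u v' => x (u, v')) *ᵥ v) =
    ∑ p : WordLE n d × WordLE n d, v p.1 * v p.2 * x p := by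
  have hst : star v = v := by funext w; simp
  rw [hst]
  rw [← Finset.univ_product_univ, Finset.sum_product]
  simp only [dotProduct, Matrix.mulVec, Matrix.of_apply, Finset.mul_sum]
  refine Finset.sum_congr rfl fun u _ => Finset.sum_congr rfl fun w _ => ?_
  ring

lemma isClosed_psdSet : IsClosed (psdSet n d) := by
  have hrep : psdSet n d =
      (⋂ q : WordLE n d × WordLE n d,
        {x : EuclideanSpace ℝ (WordLE n d × WordLE n d) | x (q.2, q.1) = x (q.1, q.2)}) ∩
      ⋂ v : WordLE n d → ℝ,
        {x : EuclideanSpace ℝ (WordLE n d × WordLE n d) |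
          0 ≤ ∑ p : WordLE n d × WordLE n d, v p.1 * v p.2 * x p} := by
    ext x
    constructor
    · intro hx
      refine ⟨Set.mem_iInter.2 fun q => ?_, Set.mem_iInter.2 fun v => ?_⟩
      · exact herm_apply hx.1 q.2 q.1
      · show 0 ≤ ∑ p : WordLE n d × WordLE n d, v p.1 * v p.2 * x p
        rw [← quad_eq]
        exact hx.dotProduct_mulVec_nonneg v
    · rintro ⟨h1, h2⟩
      refine Matrix.PosSemidef.of_dotProduct_mulVec_nonneg ?_ fun v => ?_
      · ext u v
        have := Set.mem_iInter.1 h1 (u, v)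
        simpa [Matrix.conjTranspose_apply] using this
      · rw [quad_eq]
        exact Set.mem_iInter.1 h2 v
  rw [hrep]
  have hcont : ∀ q : WordLE n d × WordLE n d,
      Continuous fun x : EuclideanSpace ℝ (WordLE n d × WordLE n d) => x q := by
    intro q
    exact LinearMap.continuous_of_finiteDimensional
      ({ toFun := fun x => x q, map_add' := fun _ _ => rfl,
         map_smul' := fun _ _ => rfl } :
        EuclideanSpace ℝ (WordLE n d × WordLE n d) →ₗ[ℝ] ℝ)
  refine IsClosed.inter (isClosed_iInter fun q => isClosed_eq (hcont _) (hcont _))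
    (isClosed_iInter fun v => ?_)
  have hcont2 : Continuous fun x : EuclideanSpace ℝ (WordLE n d × WordLE n d) =>
      ∑ p : WordLE n d × WordLE n d, v p.1 * v p.2 * x p :=
    continuous_finset_sum _ fun p _ => (continuous_const.mul (hcont p))
  exact isClosed_le continuous_const hcont2

lemma psdSet_zero : (0 : EuclideanSpace ℝ (WordLE n d × WordLE n d)) ∈ psdSet n d := by
  have : (Matrix.of fun u v => (0 : EuclideanSpace ℝ (WordLE n d × WordLE n d)) (u, v)) =
      (0 : Matrix (WordLE n d) (WordLE n d) ℝ) := rfl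
  show _ ∈ _
  rw [psdSet, Set.mem_setOf_eq, this]
  exact psd_zero

lemma psdSet_smul {c : ℝ} (hc : 0 ≤ c) {x : EuclideanSpace ℝ (WordLE n d × WordLE n d)}
    (hx : x ∈ psdSet n d) : c • x ∈ psdSet n d := by
  have h1 : (Matrix.of fun u v => (c • x) (u, v)) =
      c • Matrix.of fun u v => x (u, v) := rfl
  rw [psdSet, Set.mem_setOf_eq, h1]
  exact psd_smul hx hc

lemma psdSet_add {x y : EuclideanSpace ℝ (WordLE n d × WordLE n d)}
    (hx : x ∈ psdSet n d) (hy : y ∈ psdSet n d) : x + y ∈ psdSet n d := by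
  have h1 : (Matrix.of fun u v => (x + y) (u, v)) =
      (Matrix.of fun u v => x (u, v)) + Matrix.of fun u v => y (u, v) := rfl
  rw [psdSet, Set.mem_setOf_eq, h1]
  exact psd_add hx hy

lemma psiD_inj {x : EuclideanSpace ℝ (WordLE n d × WordLE n d)} (hx : x ∈ psdSet n d)
    (h : psiD n d x = 0) : x = 0 := by
  have h1 : sdGram n d (Matrix.of fun u v => x (u, v)) = 0 :=
    piE_inj (degLE_sdGram _) h
  have h2 : (Matrix.of fun u v => x (u, v)) = 0 := gram_inj hx h1
  ext p
  have := congrFun (congrFun h2 p.1) p.2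
  simpa using this

lemma isClosed_K : IsClosed (psiD n d '' psdSet n d) :=
  closed_image_of_cone (psiD n d) (psdSet n d) isClosed_psdSet psdSet_zero
    (fun c hc x hx => psdSet_smul hc hx) (fun x hx h => psiD_inj hx h)

/-- Membership transfer: coefficient vectors of truncated SOHS polynomials lie in `K`. -/
lemma mem_K_of_sohs {σ : NCPoly n} (h : σ ∈ SOHSdeg n d) :
    piE n d σ ∈ psiD n d '' psdSet n d := by
  obtain ⟨G, hG, rfl⟩ := sohs_to_gram h
  refine ⟨WithLp.toLp 2 (fun p => G p.1 p.2), ?_, ?_⟩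
  · have h1 : (Matrix.of fun u v =>
        (fun p : WordLE n d × WordLE n d => G p.1 p.2) (u, v)) = G := rfl
    rw [psdSet, Set.mem_setOf_eq, h1]
    exact hG
  · rfl

/-- Conversely, any element of `K` comes from a truncated SOHS polynomial. -/
lemma K_to_sohs {z : EuclideanSpace ℝ (WordLE n (2 * d))}
    (hz : z ∈ psiD n d '' psdSet n d) :
    ∃ σ ∈ SOHSdeg n d, piE n d σ = z := by
  obtain ⟨x, hx, rfl⟩ := hz
  exact ⟨sdGram n d (Matrix.of fun u v => x (u, v)), gram_to_sohs hx, rfl⟩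


/-- Evaluation of the constant coefficient. -/
def Lzero (n : ℕ) : NCPoly n →ₗ[ℝ] ℝ where
  toFun p := p.coeff 1
  map_add' p q := Finsupp.add_apply p.coeff q.coeff 1
  map_smul' c p := rfl

lemma one_coeff_one : (1 : NCPoly n).coeff 1 = 1 := Finsupp.single_eq_same

lemma reverse_injective :
    Function.Injective (FreeMonoid.reverse : FreeMonoid (Fin n) → FreeMonoid (Fin n)) := by
  intro a b h
  have := congrArg FreeMonoid.reverse h
  rwa [FreeMonoid.reverse_reverse, FreeMonoid.reverse_reverse] at this

lemma ncStar_coeff_one (p : NCPoly n) : (ncStar p).coeff 1 = p.coeff 1 := by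
  have h1 : (ncStar p).coeff 1 = Finsupp.mapDomain FreeMonoid.reverse p.coeff (FreeMonoid.reverse 1) := rfl
  rw [h1, Finsupp.mapDomain_apply reverse_injective]

lemma sohs_coeff_one_nonneg {σ : NCPoly n} (h : σ ∈ SOHSdeg n d) : 0 ≤ σ.coeff 1 := by
  obtain ⟨G, hG, rfl⟩ := sohs_to_gram h
  have he : (sdGram n d G).coeff 1 = G ⟨1, Nat.zero_le d⟩ ⟨1, Nat.zero_le d⟩ := by
    rw [sdGram_apply, ← Finset.sum_product']
    have hmem : ((⟨1, Nat.zero_le d⟩, ⟨1, Nat.zero_le d⟩) : WordLE n d × WordLE n d) ∈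
        (Finset.univ : Finset (WordLE n d × WordLE n d)) := Finset.mem_univ _
    refine (Finset.sum_eq_single_of_mem _ hmem ?_).trans ?_
    · rintro ⟨a, b⟩ _ hab
      by_cases hw : a.1.reverse * b.1 = 1
      · exfalso
        have hlen := congrArg FreeMonoid.length hw
        rw [FreeMonoid.length_mul, FreeMonoid.length_reverse, FreeMonoid.length_one] at hlen
        have ha0 : a.1 = 1 := FreeMonoid.length_eq_zero.mp (by omega)
        have hb0 : b.1 = 1 := FreeMonoid.length_eq_zero.mp (by omega)
        exact hab (Prod.ext (Subtype.ext ha0) (Subtype.ext hb0))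
      · simp [hw]
    · have hw1 : (FreeMonoid.reverse (1 : FreeMonoid (Fin n))) * 1 = 1 := rfl
      simp [hw1]
  rw [he]
  exact psd_diag_nonneg hG _

/-- The coefficient functional associated with a dual vector `y`. -/
def coeffL (n d : ℕ) (y : EuclideanSpace ℝ (WordLE n (2 * d))) : NCPoly n →ₗ[ℝ] ℝ where
  toFun p := ∑ w : WordLE n (2 * d), y w * p.coeff w.1
  map_add' p q := by
    have h1 : ∀ w : WordLE n (2 * d), y w * (p + q).coeff w.1 = y w * p.coeff w.1 + y w * q.coeff w.1 :=
      fun w => by show y w * (p.coeff w.1 + q.coeff w.1) = _; ring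
    simp only [h1, Finset.sum_add_distrib]
  map_smul' c p := by
    have h1 : ∀ w : WordLE n (2 * d), y w * (c • p).coeff w.1 = c * (y w * p.coeff w.1) :=
      fun w => by show y w * (c * p.coeff w.1) = _; ring
    simp only [h1, RingHom.id_apply, Finset.mul_sum, smul_eq_mul]

lemma coeffL_inner (y : EuclideanSpace ℝ (WordLE n (2 * d))) (p : NCPoly n) :
    coeffL n d y p = (inner ℝ y (piE n d p) : ℝ) := by
  rw [PiLp.inner_apply]
  simp only [RCLike.inner_apply, conj_trivial]
  show ∑ w, y w * p.coeff w.1 = _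
  exact Finset.sum_congr rfl fun w _ => mul_comm _ _

end
end StrongDualAux

set_option maxHeartbeats 1600000 in
open StrongDualAux in
/-- **strong duality, eigenvalue case.** For symmetric `f` of degree at
most `2d`, `sup { λ : f - λ ∈ Σ_{2d} }` equals the infimum of `L(f)` over symmetric unital
linear functionals `L` on `ℝ⟨x⟩_{2d}` that are nonnegative on `Σ_{2d}`. -/
theorem strong_duality_eigenvalue {n d : ℕ} (f : NCPoly n)
    (hf : ncStar f = f) (hdeg : degLE f (2 * d)) :
    sSup { x : EReal | ∃ lam : ℝ, f - lam • 1 ∈ SOHSdeg n d ∧ x = (lam : EReal) } =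
    sInf { x : EReal | ∃ L : NCPoly n →ₗ[ℝ] ℝ,
        (∀ p : NCPoly n, degLE p (2 * d) → L (ncStar p) = L p) ∧
        L 1 = 1 ∧
        (∀ σ ∈ SOHSdeg n d, 0 ≤ L σ) ∧
        x = (L f : EReal) } := by
  classical
  set S := { x : EReal | ∃ lam : ℝ, f - lam • 1 ∈ SOHSdeg n d ∧ x = (lam : EReal) } with hSdef
  set T := { x : EReal | ∃ L : NCPoly n →ₗ[ℝ] ℝ,
      (∀ p : NCPoly n, degLE p (2 * d) → L (ncStar p) = L p) ∧
      L 1 = 1 ∧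
      (∀ σ ∈ SOHSdeg n d, 0 ≤ L σ) ∧
      x = (L f : EReal) } with hTdef
  have weak : sSup S ≤ sInf T := by
    apply sSup_le
    rintro x ⟨lam, hlam, rfl⟩
    apply le_sInf
    rintro yv ⟨L, hLsym, hL1, hLpos, rfl⟩
    have h1 : 0 ≤ L (f - lam • 1) := hLpos _ hlam
    rw [map_sub, map_smul, hL1, smul_eq_mul, mul_one, sub_nonneg] at h1
    exact_mod_cast h1
  refine le_antisymm weak ?_
  by_contra hltc
  rw [not_le] at hltc
  obtain ⟨lam, hl1, hl2⟩ := EReal.exists_between_coe_real hltc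
  have hnot : f - lam • (1 : NCPoly n) ∉ SOHSdeg n d := by
    intro hmem
    have hle : ((lam : ℝ) : EReal) ≤ sSup S := le_sSup ⟨lam, hmem, rfl⟩
    exact absurd (lt_of_le_of_lt hle hl1) (lt_irrefl _)
  set g : NCPoly n := f - lam • 1 with hgdef
  have hsmul1 : (lam • (1 : NCPoly n)) = MonoidAlgebra.single 1 lam := by
    have h1 : (1 : NCPoly n) = MonoidAlgebra.single 1 1 := rfl
    rw [h1, MonoidAlgebra.smul_single, smul_eq_mul, mul_one]
  have hgdeg : degLE g (2 * d) := by
    intro w hw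
    have hsub := Finsupp.support_sub (f := f.coeff) (g := (lam • (1 : NCPoly n)).coeff) hw
    rw [Finset.mem_union] at hsub
    rcases hsub with h | h
    · exact hdeg w h
    · rw [hsmul1, MonoidAlgebra.coeff_single] at h
      have := Finsupp.support_single_subset h
      simp only [Finset.mem_singleton] at this
      subst this
      simp [FreeMonoid.length_one]
  have hgstar : ncStar g = g := by
    rw [hgdef, ← ncStarL_apply, map_sub, map_smul]
    simp only [ncStarL_apply, hf, ncStar_one]
  have hbK : piE n d g ∉ psiD n d '' psdSet n d := by
    intro hbk
    obtain ⟨σ, hσ, hps⟩ := K_to_sohs hbk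
    have hσg : σ = g := by
      have hd2 : degLE (σ - g) (2 * d) := by
        intro w hw
        have hsub := Finsupp.support_sub (f := σ.coeff) (g := g.coeff) hw
        rw [Finset.mem_union] at hsub
        rcases hsub with h | h
        · exact sohs_degLE hσ w h
        · exact hgdeg w h
      have hz : piE n d (σ - g) = 0 := by
        rw [map_sub, hps, sub_self]
      have := piE_inj hd2 hz
      rwa [sub_eq_zero] at this
    exact hnot (hσg ▸ hσ)
  set Kcone : ProperCone ℝ (EuclideanSpace ℝ (WordLE n (2 * d))) :=
    { carrier := psiD n d '' psdSet n d
      zero_mem' := ⟨0, psdSet_zero, map_zero _⟩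
      smul_mem' := by
        rintro c z ⟨x, hx, rfl⟩
        exact ⟨(c : ℝ) • x, psdSet_smul c.2 hx, map_smul _ _ _⟩
      add_mem' := by
        rintro z z' ⟨x, hx, rfl⟩ ⟨x', hx', rfl⟩
        exact ⟨x + x', psdSet_add hx hx', map_add _ _ _⟩
      isClosed' := isClosed_K } with hKdef
  have hKne : (Kcone : Set (EuclideanSpace ℝ (WordLE n (2 * d)))).Nonempty :=
    ⟨0, 0, psdSet_zero, map_zero _⟩
  have hKcl : IsClosed (Kcone : Set (EuclideanSpace ℝ (WordLE n (2 * d)))) := isClosed_K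
  have hbK' : piE n d g ∉ Kcone := hbK
  obtain ⟨y, hy1, hy2⟩ :=
    Kcone.hyperplane_separation' hbK'
  set Ly := coeffL n d y with hLydef
  have hLy_pos : ∀ σ ∈ SOHSdeg n d, 0 ≤ Ly σ := by
    intro σ hσ
    rw [hLydef, coeffL_inner, real_inner_comm]
    exact hy1 _ (mem_K_of_sohs hσ)
  set Lsym : NCPoly n →ₗ[ℝ] ℝ := (1 / 2 : ℝ) • (Ly + Ly ∘ₗ ncStarL n) with hLsymdef
  have hLsym_apply : ∀ p, Lsym p = (Ly p + Ly (ncStar p)) / 2 := by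
    intro p
    rw [hLsymdef]
    simp only [LinearMap.smul_apply, LinearMap.add_apply, LinearMap.comp_apply, ncStarL_apply,
      smul_eq_mul]
    ring
  have hLsym_star : ∀ p, Lsym (ncStar p) = Lsym p := by
    intro p
    rw [hLsym_apply, hLsym_apply, ncStar_ncStar]
    ring
  have hLsym_eq : ∀ p, ncStar p = p → Lsym p = Ly p := by
    intro p hp
    rw [hLsym_apply, hp]
    ring
  have hLsym_pos : ∀ σ ∈ SOHSdeg n d, 0 ≤ Lsym σ := by
    intro σ hσ
    rw [hLsym_eq σ (sohs_star hσ)]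
    exact hLy_pos σ hσ
  have ha_nonneg : 0 ≤ Lsym 1 := hLsym_pos _ one_mem_sohs
  have hβ : Lsym g < 0 := by
    rw [hLsym_eq g hgstar, hLydef, coeffL_inner, real_inner_comm]
    exact hy2
  set β := Lsym g with hβdef
  set γ := g.coeff 1 with hγdef
  set ε := min 1 (-β / (2 * (|γ| + 1))) with hεdef
  have hεpos : 0 < ε :=
    lt_min one_pos (div_pos (by linarith) (by positivity))
  have hεle : ε ≤ -β / (2 * (|γ| + 1)) := min_le_right _ _
  set c := Lsym 1 + ε with hcdef
  have hcpos : 0 < c := by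
    rw [hcdef]; linarith
  set L : NCPoly n →ₗ[ℝ] ℝ := c⁻¹ • (Lsym + ε • Lzero n) with hLdef
  have hL_apply : ∀ p, L p = c⁻¹ * (Lsym p + ε * p.coeff 1) := by
    intro p
    rw [hLdef]
    simp only [LinearMap.smul_apply, LinearMap.add_apply, smul_eq_mul]
    rfl
  have hL1 : L 1 = 1 := by
    rw [hL_apply, one_coeff_one, mul_one]
    rw [hcdef] at hcpos ⊢
    field_simp
  have hLstar : ∀ p, L (ncStar p) = L p := by
    intro p
    rw [hL_apply, hL_apply, hLsym_star, ncStar_coeff_one]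
  have hLpos : ∀ σ ∈ SOHSdeg n d, 0 ≤ L σ := by
    intro σ hσ
    rw [hL_apply]
    have h1 := hLsym_pos σ hσ
    have h2 := sohs_coeff_one_nonneg hσ
    positivity
  have hLf : L f < lam := by
    have hgl : L g < 0 := by
      rw [hL_apply]
      apply mul_neg_of_pos_of_neg (inv_pos.2 hcpos)
      have h2 : ε * γ ≤ ε * |γ| := mul_le_mul_of_nonneg_left (le_abs_self γ) hεpos.le
      have h3 : ε * |γ| ≤ (-β / (2 * (|γ| + 1))) * |γ| :=
        mul_le_mul_of_nonneg_right hεle (abs_nonneg γ)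
      have h4 : (-β / (2 * (|γ| + 1))) * |γ| ≤ -β / 2 := by
        rw [div_mul_eq_mul_div, div_le_div_iff₀ (by positivity) (by norm_num)]
        nlinarith [abs_nonneg γ, neg_pos.2 hβ]
      have h5 : Lsym g + ε * g.coeff 1 = β + ε * γ := by rw [hβdef, hγdef]
      rw [h5]
      linarith
    have hLg : L g = L f - lam := by
      rw [hgdef, map_sub, map_smul, hL1, smul_eq_mul, mul_one]
    linarith [hgl, hLg.symm.le]
  have hmemT : ((L f : ℝ) : EReal) ∈ T := ⟨L, fun p _ => hLstar p, hL1, hLpos, rfl⟩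
  have hi1 : sInf T ≤ ((L f : ℝ) : EReal) := sInf_le hmemT
  have hi2 : ((L f : ℝ) : EReal) < ((lam : ℝ) : EReal) := by exact_mod_cast hLf
  exact absurd (lt_of_le_of_lt (le_of_lt hl2) (lt_of_le_of_lt hi1 hi2)) (lt_irrefl _)
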